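/- Let v = (1/√5)(1, 2) ∈ ℝ² and x = (1/2, 0). Then u = (1/√5)(1, 0) satisfies ⟪u, w − x⟫ ≤ d_a(w) − d_a(x) for all w in P = [0,1]×[0,1], where d_a is the length metric distance in X = ([0,1]×[−1,1]) ∪ ([0,1]×[−2,−1]) ∪ ([−1,0]×[−2,−1]) to the point a = (−1/2, −2); i.e., u is a subgradient at x of d_a restricted to P. -/

import Mathlib

open scoped ENNReal RealInnerProductSpace

/-- Intrinsic (shortest-path) distance inside a subset `X` of a Euclidean space,
as the infimum of lengths (total variations) of continuous paths in `X`. -/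
noncomputable def pathDist {E : Type*} [NormedAddCommGroup E] [InnerProductSpace ℝ E]
    (X : Set E) (x y : E) : ℝ≥0∞ :=
  ⨅ (γ : ℝ → E) (_ : ContinuousOn γ (Set.Icc 0 1)) (_ : γ 0 = x) (_ : γ 1 = y)
    (_ : ∀ t ∈ Set.Icc (0:ℝ) 1, γ t ∈ X), eVariationOn γ (Set.Icc 0 1)

lemma segVar {E : Type*} [NormedAddCommGroup E] [NormedSpace ℝ E] (p q : E) {a b : ℝ}
    (hab : a ≤ b) :
    eVariationOn (fun t : ℝ => p + t • q) (Set.Icc a b) ≤ ENNReal.ofReal ((b - a) * ‖q‖) := by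
  have hlip : LipschitzWith ‖q‖₊ (fun t : ℝ => p + t • q) := by
    apply LipschitzWith.of_dist_le_mul
    intro s t
    simp only [dist_eq_norm]
    have h : (p + s • q) - (p + t • q) = (s - t) • q := by rw [sub_smul]; abel
    rw [h, norm_smul]
    simp [Real.dist_eq, Real.norm_eq_abs, mul_comm]
  have h1 : eVariationOn (fun t : ℝ => p + t • q) (Set.Icc a b)
      ≤ (‖q‖₊ : ℝ≥0∞) * eVariationOn id (Set.Icc a b) :=
    (lipschitzOnWith_univ.2 hlip).comp_eVariationOn_le (Set.mapsTo_univ _ _)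
  have h2 : eVariationOn (id : ℝ → ℝ) (Set.Icc a b) ≤ ENNReal.ofReal (b - a) := by
    have := MonotoneOn.eVariationOn_le (f := (id : ℝ → ℝ)) (s := Set.Icc a b)
      monotoneOn_id (Set.left_mem_Icc.2 hab) (Set.right_mem_Icc.2 hab)
    simpa using this
  calc eVariationOn (fun t : ℝ => p + t • q) (Set.Icc a b)
      ≤ (‖q‖₊ : ℝ≥0∞) * ENNReal.ofReal (b - a) := h1.trans (by gcongr)
    _ = ENNReal.ofReal ((b - a) * ‖q‖) := by
        rw [← ENNReal.ofReal_coe_nnreal, coe_nnnorm, ← ENNReal.ofReal_mul (norm_nonneg q), mul_comm]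

lemma pathDist_le {E : Type*} [NormedAddCommGroup E] [InnerProductSpace ℝ E]
    (X : Set E) {x y : E} {γ : ℝ → E} (h1 : ContinuousOn γ (Set.Icc 0 1))
    (h2 : γ 0 = x) (h3 : γ 1 = y) (h4 : ∀ t ∈ Set.Icc (0:ℝ) 1, γ t ∈ X) :
    pathDist X x y ≤ eVariationOn γ (Set.Icc 0 1) :=
  iInf_le_of_le γ (iInf_le_of_le h1 (iInf_le_of_le h2 (iInf_le_of_le h3 (iInf_le _ h4))))

lemma le_pathDist {E : Type*} [NormedAddCommGroup E] [InnerProductSpace ℝ E]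
    (X : Set E) (x y : E) : edist x y ≤ pathDist X x y := by
  refine le_iInf fun γ => le_iInf fun hc => le_iInf fun h0 => le_iInf fun h1 => le_iInf fun hm => ?_
  rw [← h0, ← h1]
  exact eVariationOn.edist_le γ (Set.left_mem_Icc.2 zero_le_one) (Set.right_mem_Icc.2 zero_le_one)

lemma key_ineq (w0 w1 : ℝ) (h0 : 0 ≤ w0) (h0' : w0 ≤ 1) (h1 : 0 ≤ w1) (h1' : w1 ≤ 1) :
    (1 / Real.sqrt 5) * (w0 - 1/2) + Real.sqrt 5
      ≤ Real.sqrt ((w0 + 1/2)^2 + (w1 + 2)^2) := by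
  have hs : Real.sqrt 5 ^ 2 = 5 := Real.sq_sqrt (by norm_num)
  have hs0 : 0 < Real.sqrt 5 := Real.sqrt_pos.2 (by norm_num)
  have hc2 : (1 / Real.sqrt 5)^2 = 1/5 := by rw [div_pow, one_pow, hs]
  have hc : (1 / Real.sqrt 5) * Real.sqrt 5 = 1 := by field_simp
  have hL : 0 ≤ (1 / Real.sqrt 5) * (w0 - 1/2) + Real.sqrt 5 := by
    nlinarith [hs0, hs]
  rw [← Real.sqrt_sq hL]
  apply Real.sqrt_le_sqrt
  nlinarith [sq_nonneg (w0 - 1/2), hc, hc2, h1, h1', hs]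

set_option maxHeartbeats 1000000 in
theorem stmt_15 :
    let X : Set (EuclideanSpace ℝ (Fin 2)) :=
      {w | w 0 ∈ Set.Icc (0:ℝ) 1 ∧ w 1 ∈ Set.Icc (-1:ℝ) 1} ∪
      {w | w 0 ∈ Set.Icc (0:ℝ) 1 ∧ w 1 ∈ Set.Icc (-2:ℝ) (-1)} ∪
      {w | w 0 ∈ Set.Icc (-1:ℝ) 0 ∧ w 1 ∈ Set.Icc (-2:ℝ) (-1)}
    let P : Set (EuclideanSpace ℝ (Fin 2)) :=
      {w | w 0 ∈ Set.Icc (0:ℝ) 1 ∧ w 1 ∈ Set.Icc (0:ℝ) 1}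
    let a : EuclideanSpace ℝ (Fin 2) := WithLp.toLp 2 (fun i : Fin 2 => if i = 0 then -(1/2) else -2)
    let x : EuclideanSpace ℝ (Fin 2) := WithLp.toLp 2 (fun i : Fin 2 => if i = 0 then 1/2 else 0)
    let u : EuclideanSpace ℝ (Fin 2) := WithLp.toLp 2 (fun i : Fin 2 => if i = 0 then 1 / Real.sqrt 5 else 0)
    ∀ w ∈ P, ⟪u, w - x⟫ ≤ (pathDist X w a).toReal - (pathDist X x a).toReal := by
  intro X P a x u w hw
  obtain ⟨⟨hw00, hw01⟩, hw10, hw11⟩ := hw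
  have ha0 : a 0 = -(1/2) := rfl
  have ha1 : a 1 = -2 := rfl
  have hx0 : x 0 = 1/2 := rfl
  have hx1 : x 1 = 0 := rfl
  have hu0 : u 0 = 1 / Real.sqrt 5 := rfl
  have hu1 : u 1 = 0 := rfl
  set m : EuclideanSpace ℝ (Fin 2) := WithLp.toLp 2 (fun i : Fin 2 => if i = 0 then 0 else -1) with hm
  have hm0 : m 0 = 0 := rfl
  have hm1 : m 1 = -1 := rfl
  -- straight path from x to a
  have hup : (pathDist X x a).toReal ≤ Real.sqrt 5 := by
    set γ : ℝ → EuclideanSpace ℝ (Fin 2) := fun t => x + t • (a - x) with hγ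
    have hcont : ContinuousOn γ (Set.Icc 0 1) :=
      (continuous_const.add (continuous_id.smul continuous_const)).continuousOn
    have hg0 : γ 0 = x := by simp [hγ]
    have hg1 : γ 1 = a := by simp [hγ]
    have hmem : ∀ t ∈ Set.Icc (0:ℝ) 1, γ t ∈ X := by
      intro t ht
      have hc0 : γ t 0 = 1/2 - t := by
        simp [hγ, PiLp.add_apply, PiLp.smul_apply, PiLp.sub_apply, hx0, ha0]; ring
      have hc1 : γ t 1 = -2 * t := by
        simp [hγ, PiLp.add_apply, PiLp.smul_apply, PiLp.sub_apply, hx1, ha1]; ring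
      obtain ⟨ht0, ht1⟩ := ht
      by_cases h : t ≤ 1/2
      · left; left
        constructor
        · rw [hc0]; exact ⟨by linarith, by linarith⟩
        · rw [hc1]; exact ⟨by linarith, by linarith⟩
      · push_neg at h
        right
        constructor
        · rw [hc0]; exact ⟨by linarith, by linarith⟩
        · rw [hc1]; exact ⟨by linarith, by linarith⟩
    have h1 : pathDist X x a ≤ ENNReal.ofReal ((1 - 0) * ‖a - x‖) :=
      (pathDist_le X hcont hg0 hg1 hmem).trans (segVar x (a - x) zero_le_one)
    have h2 := ENNReal.toReal_mono ENNReal.ofReal_ne_top h1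
    rw [ENNReal.toReal_ofReal (by positivity)] at h2
    have hnorm : ‖a - x‖ = Real.sqrt 5 := by
      rw [← dist_eq_norm, EuclideanSpace.dist_eq]
      simp only [Fin.sum_univ_two, Real.dist_eq, ha0, ha1, hx0, hx1, sq_abs]
      norm_num
    rw [hnorm] at h2; linarith
  -- piecewise path from w to a through m = (0,-1)
  have hfin : pathDist X w a ≠ ⊤ := by
    set γ : ℝ → EuclideanSpace ℝ (Fin 2) :=
      fun t => if t ≤ 1/2 then w + (2*t) • (m - w) else m + (2*t - 1) • (a - m) with hγ
    have hf : Continuous (fun t : ℝ => w + (2*t) • (m - w)) :=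
      continuous_const.add (((continuous_const.mul continuous_id).smul continuous_const))
    have hg : Continuous (fun t : ℝ => m + (2*t - 1) • (a - m)) :=
      continuous_const.add ((((continuous_const.mul continuous_id).sub continuous_const).smul
        continuous_const))
    have hcont : Continuous γ := by
      rw [hγ]
      refine Continuous.if_le hf hg continuous_id continuous_const ?_
      intro t ht
      subst ht
      norm_num
    have hγ0 : γ 0 = w := by
      show (if (0:ℝ) ≤ 1/2 then w + (2*(0:ℝ)) • (m - w) else m + (2*(0:ℝ) - 1) • (a - m)) = w
      rw [if_pos (by norm_num)]
      module
    have hγ1 : γ 1 = a := by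
      show (if (1:ℝ) ≤ 1/2 then w + (2*(1:ℝ)) • (m - w) else m + (2*(1:ℝ) - 1) • (a - m)) = a
      rw [if_neg (by norm_num)]
      module
    have hmem : ∀ t ∈ Set.Icc (0:ℝ) 1, γ t ∈ X := by
      intro t ⟨ht0, ht1⟩
      show (if t ≤ 1/2 then w + (2*t) • (m - w) else m + (2*t - 1) • (a - m)) ∈ X
      by_cases h : t ≤ 1/2
      · rw [if_pos h]
        have hc0 : (w + (2*t) • (m - w)) 0 = (1 - 2*t) * w 0 := by
          simp [PiLp.add_apply, PiLp.smul_apply, PiLp.sub_apply, hm0]; ring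
        have hc1 : (w + (2*t) • (m - w)) 1 = (1 - 2*t) * w 1 - 2*t := by
          simp [PiLp.add_apply, PiLp.smul_apply, PiLp.sub_apply, hm1]; ring
        have h1t : 0 ≤ 1 - 2*t := by linarith
        have hp0 : 0 ≤ (1 - 2*t) * w 0 := mul_nonneg h1t hw00
        have hq0 : (1 - 2*t) * w 0 ≤ 1 - 2*t := mul_le_of_le_one_right h1t hw01
        have hp1 : 0 ≤ (1 - 2*t) * w 1 := mul_nonneg h1t hw10
        have hq1 : (1 - 2*t) * w 1 ≤ 1 - 2*t := mul_le_of_le_one_right h1t hw11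
        left; left
        constructor
        · rw [hc0]
          exact ⟨hp0, by linarith⟩
        · rw [hc1]
          exact ⟨by linarith, by linarith⟩
      · rw [if_neg h]
        push_neg at h
        have hc0 : (m + (2*t - 1) • (a - m)) 0 = -(2*t - 1)/2 := by
          simp [PiLp.add_apply, PiLp.smul_apply, PiLp.sub_apply, hm0, ha0]; ring
        have hc1 : (m + (2*t - 1) • (a - m)) 1 = -1 - (2*t - 1) := by
          simp [PiLp.add_apply, PiLp.smul_apply, PiLp.sub_apply, hm1, ha1]; ring
        right
        constructor
        · rw [hc0]; exact ⟨by linarith, by linarith⟩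
        · rw [hc1]; exact ⟨by linarith, by linarith⟩
    have hA : IsGreatest (Set.Icc (0:ℝ) (1/2)) (1/2) :=
      ⟨⟨by norm_num, le_refl _⟩, fun y hy => hy.2⟩
    have hB : IsLeast (Set.Icc (1/2:ℝ) 1) (1/2) :=
      ⟨⟨le_refl _, by norm_num⟩, fun y hy => hy.1⟩
    have hsplit := eVariationOn.union γ hA hB
    rw [Set.Icc_union_Icc_eq_Icc (by norm_num : (0:ℝ) ≤ 1/2) (by norm_num : (1:ℝ)/2 ≤ 1)]
      at hsplit
    have e1 : eVariationOn γ (Set.Icc 0 (1/2))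
        = eVariationOn (fun t : ℝ => w + t • ((2:ℝ) • (m - w))) (Set.Icc 0 (1/2)) := by
      apply eVariationOn.eq_of_eqOn
      intro t ht
      show (if t ≤ 1/2 then w + (2*t) • (m - w) else m + (2*t - 1) • (a - m))
        = w + t • ((2:ℝ) • (m - w))
      rw [if_pos ht.2]
      module
    have e2 : eVariationOn γ (Set.Icc (1/2) 1)
        = eVariationOn (fun t : ℝ => (m - (a - m)) + t • ((2:ℝ) • (a - m))) (Set.Icc (1/2) 1) := by
      apply eVariationOn.eq_of_eqOn
      intro t ht
      show (if t ≤ 1/2 then w + (2*t) • (m - w) else m + (2*t - 1) • (a - m))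
        = (m - (a - m)) + t • ((2:ℝ) • (a - m))
      by_cases h : t ≤ 1/2
      · have h2 : t = 1/2 := le_antisymm h ht.1
        subst h2
        rw [if_pos le_rfl]
        module
      · rw [if_neg h]
        module
    have b1 := segVar w ((2:ℝ) • (m - w)) (by norm_num : (0:ℝ) ≤ 1/2)
    have b2 := segVar (m - (a - m)) ((2:ℝ) • (a - m)) (by norm_num : (1:ℝ)/2 ≤ 1)
    have hle : pathDist X w a ≤ ENNReal.ofReal ((1/2 - 0) * ‖(2:ℝ) • (m - w)‖)
        + ENNReal.ofReal ((1 - 1/2) * ‖(2:ℝ) • (a - m)‖) := by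
      refine (pathDist_le X hcont.continuousOn hγ0 hγ1 hmem).trans ?_
      rw [hsplit, e1, e2]
      exact add_le_add b1 b2
    exact ne_top_of_le_ne_top (ENNReal.add_ne_top.2 ⟨ENNReal.ofReal_ne_top, ENNReal.ofReal_ne_top⟩) hle
  have hd : dist w a = Real.sqrt ((w 0 + 1/2)^2 + (w 1 + 2)^2) := by
    rw [EuclideanSpace.dist_eq]
    simp only [Fin.sum_univ_two, Real.dist_eq, ha0, ha1, sq_abs]
    congr 1
    ring
  have hlow : Real.sqrt ((w 0 + 1/2)^2 + (w 1 + 2)^2) ≤ (pathDist X w a).toReal := by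
    have h2 := ENNReal.toReal_mono hfin (le_pathDist X w a)
    rw [edist_dist, ENNReal.toReal_ofReal dist_nonneg, hd] at h2
    exact h2
  have hinner : ⟪u, w - x⟫ = (1/Real.sqrt 5) * (w 0 - 1/2) := by
    simp [PiLp.inner_apply, Fin.sum_univ_two, PiLp.sub_apply, hu0, hu1, hx0, hx1]; ring
  rw [hinner]
  have hkey := key_ineq (w 0) (w 1) hw00 hw01 hw10 hw11
  linarith
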